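/- Let m ≥ 1 and let t₁, …, t_k be real m×m matrices that are skew-symmetric (tᵢᵀ = −tᵢ), pairwise commuting (tᵢtⱼ = tⱼtᵢ for all i, j), and linearly independent over ℝ. Then k ≤ ⌊m/2⌋. -/

import Mathlib

open Matrix

open Module.End

noncomputable section

namespace CSSLI

variable {m k : ℕ}

/-- Complexified matrices multiplied by I. -/
def cA (t : Fin k → Matrix (Fin m) (Fin m) ℝ) (i : Fin k) : Matrix (Fin m) (Fin m) ℂ :=
  Complex.I • (t i).map (Complex.ofReal)

lemma cA_hermitian (t : Fin k → Matrix (Fin m) (Fin m) ℝ)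
    (hskew : ∀ i, (t i)ᵀ = -(t i)) (i : Fin k) : (cA t i).IsHermitian := by
  have h : ∀ x y, t i x y = -(t i y x) := by
    intro x y
    have := congrFun (congrFun (hskew i) y) x
    simpa [Matrix.transpose_apply] using this
  unfold Matrix.IsHermitian cA
  ext x y
  rw [Matrix.conjTranspose_apply]
  simp [Matrix.map_apply, h x y, Complex.ext_iff]

lemma map_ofReal_mul (M N : Matrix (Fin m) (Fin m) ℝ) :
    (M * N).map Complex.ofReal = M.map Complex.ofReal * N.map Complex.ofReal := by
  ext x y
  simp [Matrix.mul_apply, Matrix.map_apply]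

lemma cA_mul (t : Fin k → Matrix (Fin m) (Fin m) ℝ)
    (hcomm : ∀ i j, t i * t j = t j * t i) (i j : Fin k) :
    cA t i * cA t j = cA t j * cA t i := by
  unfold cA
  rw [Matrix.smul_mul, Matrix.mul_smul, Matrix.smul_mul, Matrix.mul_smul,
    ← map_ofReal_mul, ← map_ofReal_mul, hcomm]

abbrev E (m : ℕ) := EuclideanSpace ℂ (Fin m)

def cT (t : Fin k → Matrix (Fin m) (Fin m) ℝ) (i : Fin k) : E m →ₗ[ℂ] E m :=
  Matrix.toEuclideanLin (cA t i)

lemma cT_symm (t : Fin k → Matrix (Fin m) (Fin m) ℝ)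
    (hskew : ∀ i, (t i)ᵀ = -(t i)) (i : Fin k) : (cT t i).IsSymmetric :=
  Matrix.isHermitian_iff_isSymmetric.mp (cA_hermitian t hskew i)

lemma cT_comm (t : Fin k → Matrix (Fin m) (Fin m) ℝ)
    (hcomm : ∀ i j, t i * t j = t j * t i) (i j : Fin k) :
    Commute (cT t i) (cT t j) := by
  have h : ∀ a b : Matrix (Fin m) (Fin m) ℂ,
      Matrix.toEuclideanLin (a * b)
        = Matrix.toEuclideanLin a ∘ₗ Matrix.toEuclideanLin b := by
    intro a b
    rw [Matrix.toEuclideanLin_eq_toLin, Matrix.toLin_mul _ (PiLp.basisFun 2 ℂ (Fin m)) _]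
  show cT t i * cT t j = cT t j * cT t i
  have := congrArg Matrix.toEuclideanLin (cA_mul t hcomm i j)
  rw [h, h] at this
  exact this

lemma mem_eig_iff (t : Fin k → Matrix (Fin m) (Fin m) ℝ) (i : Fin k) (c : ℂ) (v : E m) :
    v ∈ eigenspace (cT t i) c ↔
      cA t i *ᵥ (WithLp.equiv 2 (Fin m → ℂ) v) = c • (WithLp.equiv 2 (Fin m → ℂ) v) := by
  rw [mem_eigenspace_iff]
  constructor
  · intro h
    have := congrArg (WithLp.equiv 2 (Fin m → ℂ)) h
    simpa [cT, Matrix.ofLp_toEuclideanLin_apply] using this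
  · intro h
    apply (WithLp.equiv 2 (Fin m → ℂ)).injective
    simpa [cT, Matrix.ofLp_toEuclideanLin_apply] using h

lemma star_eig (t : Fin k → Matrix (Fin m) (Fin m) ℝ) (i : Fin k) (γ : ℝ) (v : Fin m → ℂ)
    (h : cA t i *ᵥ v = (γ:ℂ) • v) :
    cA t i *ᵥ star v = ((-γ : ℝ):ℂ) • star v := by
  have hstar : ∀ z : ℂ, star z = (starRingEnd ℂ) z := fun z => rfl
  funext j
  have h1 : ∀ x : Fin m, cA t i j x * star (v x) = star (-(cA t i j x * v x)) := by
    intro x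
    simp only [cA, Matrix.smul_apply, Matrix.map_apply, smul_eq_mul, hstar, map_neg,
      _root_.map_mul, Complex.conj_I, Complex.conj_ofReal]
    ring
  have h2 : (cA t i *ᵥ star v) j = star (-((cA t i *ᵥ v) j)) := by
    simp only [Matrix.mulVec, dotProduct, Pi.star_apply, h1, star_neg,
      Finset.sum_neg_distrib, star_sum]
  rw [h2, h]
  simp [smul_eq_mul, hstar, Complex.ext_iff]

/-- A finite set of vectors not containing `0` and closed under negation splits into pairs. -/
lemma pair_split {k : ℕ} : ∀ (n : ℕ) (S : Finset (Fin k → ℝ)), S.card = n →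
    (0 : Fin k → ℝ) ∉ S → (∀ γ ∈ S, -γ ∈ S) →
    ∃ Q : Finset (Fin k → ℝ), Q ⊆ S ∧ S.card = 2 * Q.card ∧ ∀ γ ∈ S, γ ∈ Q ∨ -γ ∈ Q := by
  intro n
  induction n using Nat.strong_induction_on with
  | _ n ih =>
    intro S hcard h0 hneg
    rcases S.eq_empty_or_nonempty with rfl | ⟨γ, hγ⟩
    · exact ⟨∅, by simp⟩
    · have hγn : -γ ∈ S := hneg γ hγ
      have hne : γ ≠ -γ := by
        intro h
        apply h0
        have hγ0 : γ = 0 := by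
          funext i
          have h2 := congrFun h i
          simp only [Pi.neg_apply] at h2
          have h3 : γ i = 0 := by linarith
          simpa using h3
        rwa [hγ0] at hγ
      set S' := S \ {γ, -γ} with hS'
      have hpair : ({γ, -γ} : Finset (Fin k → ℝ)) ⊆ S := by
        intro x hx
        rcases Finset.mem_insert.mp hx with rfl | hx
        · exact hγ
        · rcases Finset.mem_singleton.mp hx with rfl
          exact hγn
      have hcard2 : ({γ, -γ} : Finset (Fin k → ℝ)).card = 2 := by
        rw [Finset.card_insert_of_notMem (by simpa using hne), Finset.card_singleton]
      have hc' : S'.card = n - 2 := by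
        rw [hS', Finset.card_sdiff_of_subset hpair, hcard2, hcard]
      have hn2 : 2 ≤ n := by
        rw [← hcard]
        calc 2 = ({γ, -γ} : Finset (Fin k → ℝ)).card := hcard2.symm
          _ ≤ S.card := Finset.card_le_card hpair
      have h0' : (0 : Fin k → ℝ) ∉ S' := fun h => h0 (Finset.mem_sdiff.mp h).1
      have hneg' : ∀ δ ∈ S', -δ ∈ S' := by
        intro δ hδ
        obtain ⟨hδS, hδp⟩ := Finset.mem_sdiff.mp hδ
        rw [Finset.mem_sdiff]
        refine ⟨hneg δ hδS, ?_⟩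
        intro hmem
        apply hδp
        rcases Finset.mem_insert.mp hmem with h | h
        · rw [Finset.mem_insert, Finset.mem_singleton]
          right
          rw [← h, neg_neg]
        · have h2 : δ = γ := neg_injective (Finset.mem_singleton.mp h)
          rw [Finset.mem_insert]
          exact Or.inl h2
      obtain ⟨Q, hQsub, hQcard, hQcover⟩ := ih (n - 2) (by omega) S' hc' h0' hneg'
      have hγQ : γ ∉ Q := fun h => by
        have := Finset.mem_sdiff.mp (hQsub h)
        exact this.2 (Finset.mem_insert_self _ _)
      refine ⟨insert γ Q, ?_, ?_, ?_⟩
      · intro x hx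
        rcases Finset.mem_insert.mp hx with rfl | hx
        · exact hγ
        · exact (Finset.mem_sdiff.mp (hQsub hx)).1
      · rw [Finset.card_insert_of_notMem hγQ, hcard, Nat.mul_add, Nat.mul_one,
          ← hQcard, hc']
        omega
      · intro δ hδ
        by_cases hδγ : δ = γ
        · left
          rw [hδγ]
          exact Finset.mem_insert_self _ _
        by_cases hδγ' : δ = -γ
        · right
          rw [hδγ', neg_neg]
          exact Finset.mem_insert_self _ _
        · have hδ' : δ ∈ S' := by
            rw [Finset.mem_sdiff]
            refine ⟨hδ, ?_⟩
            intro hmem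
            rcases Finset.mem_insert.mp hmem with h | h
            · exact hδγ h
            · exact hδγ' (Finset.mem_singleton.mp h)
          rcases hQcover δ hδ' with h | h
          · exact Or.inl (Finset.mem_insert_of_mem h)
          · exact Or.inr (Finset.mem_insert_of_mem h)

end CSSLI

end


open CSSLI

/-- If `t₁, …, t_k` are real `m×m` matrices that are skew-symmetric,
pairwise commuting, and linearly independent over `ℝ`, then `k ≤ ⌊m/2⌋`. -/
theorem commuting_skew_symmetric_linearIndependent_card_le
    (m k : ℕ) (hm : 1 ≤ m) (t : Fin k → Matrix (Fin m) (Fin m) ℝ)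
    (hskew : ∀ i, (t i)ᵀ = -(t i))
    (hcomm : ∀ i j, t i * t j = t j * t i)
    (hli : LinearIndependent ℝ t) :
    k ≤ m / 2 := by
  classical
  have hsymm : ∀ i, (cT t i).IsSymmetric := cT_symm t hskew
  have htop : ⨆ χ : Fin k → ℂ, ⨅ i, Module.End.eigenspace (cT t i) (χ i) = ⊤ :=
    LinearMap.IsSymmetric.iSup_iInf_eq_top_of_commute hsymm
      (fun i j _ => cT_comm t hcomm i j)
  set Eig : (Fin k → ℝ) → Submodule ℂ (E m) :=
    fun γ => ⨅ i, Module.End.eigenspace (cT t i) ((γ i : ℂ)) with hEig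
  set W : Set (Fin k → ℝ) := {γ | Eig γ ≠ ⊥} with hW
  -- every nontrivial joint eigenspace has a real weight
  have hreal : ∀ χ : Fin k → ℂ, (⨅ i, Module.End.eigenspace (cT t i) (χ i)) ≠ ⊥ →
      ∃ γ : Fin k → ℝ, (fun i => (γ i : ℂ)) = χ ∧ γ ∈ W := by
    intro χ hχ
    have hev : ∀ i, (((χ i).re : ℝ) : ℂ) = χ i := by
      intro i
      have hne : Module.End.eigenspace (cT t i) (χ i) ≠ ⊥ := by
        intro hbot
        exact hχ (le_bot_iff.mp (hbot ▸ iInf_le _ i))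
      have := (hsymm i).conj_eigenvalue_eq_self
        (Module.End.hasEigenvalue_iff.mpr hne)
      exact Complex.conj_eq_iff_re.mp this
    refine ⟨fun i => (χ i).re, funext hev, ?_⟩
    show Eig (fun i => (χ i).re) ≠ ⊥
    rw [hEig]
    simp only [hev]
    exact hχ
  -- W is closed under negation
  have hnegW : ∀ γ ∈ W, -γ ∈ W := by
    intro γ hγ
    obtain ⟨v, hv, hv0⟩ := Submodule.exists_mem_ne_zero_of_ne_bot hγ
    show Eig (-γ) ≠ ⊥
    rw [Submodule.ne_bot_iff]
    refine ⟨(WithLp.equiv 2 (Fin m → ℂ)).symm (star (WithLp.equiv 2 (Fin m → ℂ) v)), ?_, ?_⟩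
    · rw [hEig, Submodule.mem_iInf]
      intro i
      rw [mem_eig_iff]
      have hvi : cA t i *ᵥ (WithLp.equiv 2 (Fin m → ℂ) v)
          = ((γ i : ℂ)) • (WithLp.equiv 2 (Fin m → ℂ) v) := by
        rw [← mem_eig_iff]
        exact (Submodule.mem_iInf _).mp hv i
      have := star_eig t i (γ i) _ hvi
      simpa using this
    · intro h
      apply hv0
      have h2 : star ((WithLp.equiv 2 (Fin m → ℂ)) v) = 0 := by
        simpa using congrArg (WithLp.equiv 2 (Fin m → ℂ)) h
      have h3 : (WithLp.equiv 2 (Fin m → ℂ)) v = 0 := by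
        simpa using congrArg star h2
      simpa using congrArg (WithLp.equiv 2 (Fin m → ℂ)).symm h3
  -- choose a nonzero vector in each joint eigenspace
  have hWchoice : ∀ γ : W, ∃ v : E m, v ∈ Eig γ ∧ v ≠ 0 := by
    rintro ⟨γ, hγ⟩
    obtain ⟨v, hv, hv0⟩ := Submodule.exists_mem_ne_zero_of_ne_bot hγ
    exact ⟨v, hv, hv0⟩
  choose vv hvmem hvne using hWchoice
  -- the normalized vectors are orthonormal
  have hON : Orthonormal ℂ (fun γ : W => ((‖vv γ‖ : ℂ))⁻¹ • vv γ) := by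
    constructor
    · intro γ
      have h0 : ‖vv γ‖ ≠ 0 := norm_ne_zero_iff.mpr (hvne γ)
      rw [norm_smul]
      simp [h0]
    · intro γ γ' hne
      have horth := LinearMap.IsSymmetric.orthogonalFamily_iInf_eigenspaces hsymm
        (n := Fin k) (T := fun i => cT t i)
      have hfn : (fun i => (((γ : Fin k → ℝ)) i : ℂ)) ≠ (fun i => (((γ' : Fin k → ℝ)) i : ℂ)) := by
        intro h
        apply hne
        apply Subtype.ext
        funext i
        exact_mod_cast congrFun h i
      have := horth hfn ⟨vv γ, hvmem γ⟩ ⟨vv γ', hvmem γ'⟩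
      simp only [Submodule.coe_subtypeₗᵢ, Submodule.coe_subtype] at this
      rw [inner_smul_left, inner_smul_right, this, mul_zero, mul_zero]
  -- hence W is finite with at most m elements
  have hli2 := hON.linearIndependent
  haveI hfinW : Finite W := hli2.finite
  have hWfin : W.Finite := Set.finite_coe_iff.mp hfinW
  haveI := hWfin.fintype
  have hcardW : Fintype.card W ≤ m := by
    have := hli2.fintype_card_le_finrank
    rwa [finrank_euclideanSpace_fin] at this
  -- split the nonzero weights into pairs {γ, -γ}
  let FW : Finset (Fin k → ℝ) := hWfin.toFinset
  let S : Finset (Fin k → ℝ) := FW.filter (fun γ => γ ≠ 0)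
  have hSmem : ∀ γ, γ ∈ S ↔ (γ ∈ W ∧ γ ≠ 0) := by
    intro γ
    simp [S, FW, Finset.mem_filter, Set.Finite.mem_toFinset]
  have hS0 : (0 : Fin k → ℝ) ∉ S := by
    intro h
    exact ((hSmem 0).mp h).2 rfl
  have hSneg : ∀ γ ∈ S, -γ ∈ S := by
    intro γ hγ
    rw [hSmem] at hγ ⊢
    exact ⟨hnegW γ hγ.1, neg_ne_zero.mpr hγ.2⟩
  obtain ⟨Q, hQsub, hQcard, hQcover⟩ := pair_split S.card S rfl hS0 hSneg
  have hQm : 2 * Q.card ≤ m := by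
    rw [← hQcard]
    calc S.card ≤ FW.card := Finset.card_le_card (Finset.filter_subset _ _)
      _ = Fintype.card W := by rw [Set.Finite.card_toFinset]
      _ ≤ m := hcardW
  -- key injectivity: if all pairings with positive weights vanish, coefficients vanish
  have hinj : ∀ c : Fin k → ℝ, (∀ γ ∈ Q, ∑ i, c i * γ i = 0) → c = 0 := by
    intro c hc
    have hzero : ∀ γ ∈ W, ∑ i, c i * γ i = 0 := by
      intro γ hγ
      by_cases hγ0 : γ = 0
      · simp [hγ0]
      · have hγS : γ ∈ S := (hSmem γ).mpr ⟨hγ, hγ0⟩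
        rcases hQcover γ hγS with h | h
        · exact hc γ h
        · have h1 := hc _ h
          have h2 : ∑ i, c i * (-γ) i = -∑ i, c i * γ i := by
            rw [← Finset.sum_neg_distrib]
            congr 1
            funext i
            simp
          rw [h2, neg_eq_zero] at h1
          exact h1
    have hTzero : (∑ i, (c i : ℂ) • cT t i) = 0 := by
      apply LinearMap.ext
      intro v
      rw [LinearMap.zero_apply]
      have hv : v ∈ ⨆ χ : Fin k → ℂ, ⨅ i, Module.End.eigenspace (cT t i) (χ i) :=
        htop ▸ Submodule.mem_top
      refine Submodule.iSup_induction (motive := fun x => (∑ i, (c i : ℂ) • cT t i) x = 0)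
        _ hv ?_ ?_ ?_
      · intro χ x hx
        by_cases hbot : (⨅ i, Module.End.eigenspace (cT t i) (χ i)) = ⊥
        · rw [hbot] at hx
          simp only [Submodule.mem_bot] at hx
          rw [hx, map_zero]
        · obtain ⟨γ, hγχ, hγW⟩ := hreal χ hbot
          have heig : ∀ i, cT t i x = χ i • x := by
            intro i
            exact Module.End.mem_eigenspace_iff.mp ((Submodule.mem_iInf _).mp hx i)
          have hsum : (∑ i, (c i : ℂ) • cT t i) x = (∑ i, (c i : ℂ) * χ i) • x := by
            rw [LinearMap.sum_apply, Finset.sum_smul]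
            congr 1
            funext i
            rw [LinearMap.smul_apply, heig i, smul_smul]
          rw [hsum]
          have hcoef : (∑ i, (c i : ℂ) * χ i) = 0 := by
            rw [← hγχ]
            have : (∑ i, (c i : ℂ) * ((γ i : ℝ) : ℂ)) = ((∑ i, c i * γ i : ℝ) : ℂ) := by
              push_cast
              rfl
            rw [this, hzero γ hγW, Complex.ofReal_zero]
          rw [hcoef, zero_smul]
      · show (∑ i, (c i : ℂ) • cT t i) 0 = 0
        rw [map_zero]
      · intro x y hx hy
        show (∑ i, (c i : ℂ) • cT t i) (x + y) = 0
        rw [map_add, hx, hy, add_zero]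
    -- back to matrices
    have hAzero : (∑ i, (c i : ℂ) • cA t i) = 0 := by
      apply Matrix.toEuclideanLin.injective
      rw [map_sum, map_zero]
      have hms : ∀ i : Fin k, Matrix.toEuclideanLin ((c i : ℂ) • cA t i)
          = (c i : ℂ) • cT t i := fun i => _root_.map_smul _ _ _
      simp only [hms]
      exact hTzero
    have htzero : (∑ i, c i • t i) = 0 := by
      ext x y
      have := congrFun (congrFun (congrArg (fun M => M) hAzero) x) y
      have h1 : (∑ i, (c i : ℂ) • cA t i) x y = Complex.I * ((∑ i, c i • t i) x y : ℝ) := by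
        rw [Matrix.sum_apply]
        simp only [cA, Matrix.smul_apply, Matrix.map_apply, smul_eq_mul]
        rw [Matrix.sum_apply]
        push_cast
        rw [Finset.mul_sum]
        congr 1
        funext i
        simp only [Matrix.smul_apply, smul_eq_mul]
        push_cast
        ring
      rw [hAzero] at h1
      simp only [Matrix.zero_apply] at h1
      field_simp at h1
      simpa using h1
    have := Fintype.linearIndependent_iff.mp hli c (by simpa using htzero)
    funext i
    exact this i
  -- conclude via a rank argument
  have hkP : k ≤ Q.card := by
    let F : (Fin k → ℝ) →ₗ[ℝ] (Q → ℝ) :=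
      { toFun := fun c γ => ∑ i, c i * (γ : Fin k → ℝ) i
        map_add' := by
          intro a b
          funext γ
          simp [add_mul, Finset.sum_add_distrib]
        map_smul' := by
          intro r a
          funext γ
          simp [Finset.mul_sum, mul_assoc] }
    have hFinj : Function.Injective F := by
      rw [← LinearMap.ker_eq_bot, LinearMap.ker_eq_bot']
      intro c hcF
      apply hinj c
      intro γ hγ
      exact congrFun hcF ⟨γ, hγ⟩
    have := LinearMap.finrank_le_finrank_of_injective hFinj
    rwa [Module.finrank_pi, Module.finrank_pi, Fintype.card_fin, Fintype.card_coe] at this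
  omega
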